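/- Let p ∈ NC(k,l), q ∈ NC(l,m), let C be a non-trivial (p,q)-connected component, and define S_p(C) (resp. S_q(C)) as the set of middle points x in the interval [min(C∩[l]), max(C∩[l])] lying strictly outside the middle-row interval of every block of p (resp. q) belonging to C. Then S_p(C) and S_q(C) are disjoint. -/

import Mathlib

namespace Stmt10

/-- Two points of the three-row diagram (rows `0`, `1`, `2`) are related if they are
joined by a finite chain of pairwise-overlapping blocks of `p ⊔ q`. -/
def ChainRel (p q : Set (Set (ℕ × ℕ))) (a b : ℕ × ℕ) : Prop :=
  ∃ (n : ℕ) (Bs : Fin (n + 1) → Set (ℕ × ℕ)),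
    (∀ i, Bs i ∈ p ∪ q) ∧ a ∈ Bs 0 ∧ b ∈ Bs (Fin.last n) ∧
      ∀ i : Fin n, (Bs i.castSucc ∩ Bs i.succ).Nonempty

/-- `x` lies in the middle-row interval `[min (S ∩ [l]), max (S ∩ [l])]` of `S`. -/
def InMidInterval (S : Set (ℕ × ℕ)) (x : ℕ) : Prop :=
  (∃ y ∈ S, y.1 = 1 ∧ y.2 ≤ x) ∧ ∃ z ∈ S, z.1 = 1 ∧ x ≤ z.2

/-- `S_r(C)`: middle points of the interval of `C` lying strictly outside the
middle-row interval of every block of the partition `r` that meets `C`. -/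
def Sside (r : Set (Set (ℕ × ℕ))) (C : Set (ℕ × ℕ)) (x : ℕ) : Prop :=
  InMidInterval C x ∧ ∀ D ∈ r, (D ∩ C).Nonempty → ¬ InMidInterval D x

def Step (p q : Set (Set (ℕ × ℕ))) (u v : ℕ × ℕ) : Prop :=
  ∃ B, B ∈ p ∪ q ∧ u ∈ B ∧ v ∈ B

lemma chain_to_rtg (p q : Set (Set (ℕ × ℕ))) :
    ∀ n (Bs : Fin (n + 1) → Set (ℕ × ℕ)) (u v : ℕ × ℕ),
      (∀ i, Bs i ∈ p ∪ q) → u ∈ Bs 0 → v ∈ Bs (Fin.last n) →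
      (∀ i : Fin n, (Bs i.castSucc ∩ Bs i.succ).Nonempty) →
      Relation.ReflTransGen (Step p q) u v := by
  intro n
  induction n with
  | zero =>
    intro Bs u v hmem hu hv _
    exact Relation.ReflTransGen.single ⟨Bs 0, hmem 0, hu, hv⟩
  | succ n ih =>
    intro Bs u v hmem hu hv hov
    obtain ⟨w, hw1, hw2⟩ := hov 0
    have hw1' : w ∈ Bs 0 := by simpa using hw1
    have h1 : Relation.ReflTransGen (Step p q) u w :=
      Relation.ReflTransGen.single ⟨Bs 0, hmem 0, hu, hw1'⟩
    have h2 : Relation.ReflTransGen (Step p q) w v := by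
      apply ih (Bs ∘ Fin.succ) w v (fun i => hmem _)
      · simpa using hw2
      · simpa [Fin.succ_last] using hv
      · intro i
        have := hov i.succ
        simpa only [Function.comp_apply, Fin.succ_castSucc] using this
    exact h1.trans h2

lemma rtg_to_chain (p q : Set (Set (ℕ × ℕ))) {u v : ℕ × ℕ}
    (h : Relation.ReflTransGen (Step p q) u v)
    (hu : ∃ B, B ∈ p ∪ q ∧ u ∈ B) : ChainRel p q u v := by
  induction h with
  | refl =>
    obtain ⟨B, hB, huB⟩ := hu
    exact ⟨0, fun _ => B, fun _ => hB, huB, huB, fun i => i.elim0⟩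
  | @tail b c h₁ h₂ ih =>
    obtain ⟨n, Bs, hmem, huB, hbB, hov⟩ := ih
    obtain ⟨B0, hB0, hbB0, hcB0⟩ := h₂
    refine ⟨n + 1, Fin.snoc Bs B0, ?_, ?_, ?_, ?_⟩
    · intro i
      induction i using Fin.lastCases with
      | last => simpa using hB0
      | cast j => simpa using hmem j
    · have h0 : (0 : Fin (n + 2)) = Fin.castSucc 0 := by simp
      rw [h0, Fin.snoc_castSucc]; exact huB
    · simpa using hcB0
    · intro i
      induction i using Fin.lastCases with
      | last =>
        refine ⟨b, ?_, ?_⟩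
        · simpa [Fin.snoc_castSucc] using hbB
        · simpa [Fin.succ_last] using hbB0
      | cast j =>
        rw [Fin.succ_castSucc, Fin.snoc_castSucc, Fin.snoc_castSucc]
        exact hov j

lemma rtg_symm {α : Type*} {r : α → α → Prop} (hs : ∀ a b, r a b → r b a)
    {a b : α} (h : Relation.ReflTransGen r a b) : Relation.ReflTransGen r b a := by
  induction h with
  | refl => exact .refl
  | tail _ h₂ ih => exact Relation.ReflTransGen.head (hs _ _ h₂) ih


/-- For a non-trivial `(p,q)`-connected component `C`, the sets `S_p(C)` and `S_q(C)`
are disjoint. -/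
theorem stmt10 (k l m : ℕ) (p q : Set (Set (ℕ × ℕ)))
    (hpsub : ∀ B ∈ p, B ⊆ {x : ℕ × ℕ |
      (x.1 = 0 ∧ 1 ≤ x.2 ∧ x.2 ≤ k) ∨ (x.1 = 1 ∧ 1 ≤ x.2 ∧ x.2 ≤ l)})
    (hqsub : ∀ B ∈ q, B ⊆ {x : ℕ × ℕ |
      (x.1 = 1 ∧ 1 ≤ x.2 ∧ x.2 ≤ l) ∨ (x.1 = 2 ∧ 1 ≤ x.2 ∧ x.2 ≤ m)})
    (hppart : ∀ x : ℕ × ℕ,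
      ((x.1 = 0 ∧ 1 ≤ x.2 ∧ x.2 ≤ k) ∨ (x.1 = 1 ∧ 1 ≤ x.2 ∧ x.2 ≤ l)) →
        ∃! B, B ∈ p ∧ x ∈ B)
    (hqpart : ∀ x : ℕ × ℕ,
      ((x.1 = 1 ∧ 1 ≤ x.2 ∧ x.2 ≤ l) ∨ (x.1 = 2 ∧ 1 ≤ x.2 ∧ x.2 ≤ m)) →
        ∃! B, B ∈ q ∧ x ∈ B)
    (C : Set (ℕ × ℕ)) (a : ℕ × ℕ) (hCa : C = {b | ChainRel p q a b})
    (hmid : ∃ x ∈ C, x.1 = 1) :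
    ∀ x : ℕ, ¬ (Sside p C x ∧ Sside q C x) := by
  intro x hx
  obtain ⟨hSp, hSq⟩ := hx
  obtain ⟨⟨y, hyC, hy1, hyx⟩, ⟨z, hzC, hz1, hxz⟩⟩ := hSp.1
  -- every block of p ∪ q meeting C avoids x
  have hblocks : ∀ B, B ∈ p ∪ q → (B ∩ C).Nonempty → ¬ InMidInterval B x := by
    intro B hB hBC
    cases hB with
    | inl h => exact hSp.2 B h hBC
    | inr h => exact hSq.2 B h hBC
  -- a belongs to some block
  have haB : ∃ B, B ∈ p ∪ q ∧ a ∈ B := by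
    obtain ⟨w, hwC, _⟩ := hmid
    rw [hCa] at hwC
    obtain ⟨n, Bs, hmem, hu, _, _⟩ := hwC
    exact ⟨Bs 0, hmem 0, hu⟩
  have hC_rtg : ∀ b, b ∈ C ↔ Relation.ReflTransGen (Step p q) a b := by
    intro b
    rw [hCa]
    constructor
    · rintro ⟨n, Bs, hmem, hu, hv, hov⟩
      exact chain_to_rtg p q n Bs a b hmem hu hv hov
    · intro h
      exact rtg_to_chain p q h haB
  have hStepSymm : ∀ u v, Step p q u v → Step p q v u := by
    rintro u v ⟨B, hB, h1, h2⟩; exact ⟨B, hB, h2, h1⟩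
  have hyz : Relation.ReflTransGen (Step p q) y z :=
    (rtg_symm hStepSymm ((hC_rtg y).1 hyC)).trans ((hC_rtg z).1 hzC)
  -- key invariant propagated along the chain from y
  have key : ∀ b, Relation.ReflTransGen (Step p q) y b →
      b ∈ C ∧ ∀ B, B ∈ p ∪ q → b ∈ B → ∀ w ∈ B, w.1 = 1 → w.2 < x := by
    intro b h
    induction h with
    | refl =>
      refine ⟨hyC, ?_⟩
      intro B hB hyB w hwB hw1
      have hnB := hblocks B hB ⟨y, hyB, hyC⟩
      have h2 : ¬ ∃ v ∈ B, v.1 = 1 ∧ x ≤ v.2 :=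
        fun h2 => hnB ⟨⟨y, hyB, hy1, hyx⟩, h2⟩
      by_contra hcon
      exact h2 ⟨w, hwB, hw1, le_of_not_gt hcon⟩
    | @tail b c h₁ h₂ ih =>
      obtain ⟨B0, hB0, hbB0, hcB0⟩ := h₂
      have hbC : b ∈ C := ih.1
      have hcC : c ∈ C := (hC_rtg c).2
        (((hC_rtg b).1 hbC).tail ⟨B0, hB0, hbB0, hcB0⟩)
      refine ⟨hcC, ?_⟩
      intro B hB hcB w hwB hw1
      have hnB := hblocks B hB ⟨c, hcB, hcC⟩
      by_cases hle : ∃ u ∈ B, u.1 = 1 ∧ u.2 ≤ x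
      · have h2 : ¬ ∃ v ∈ B, v.1 = 1 ∧ x ≤ v.2 := fun h2 => hnB ⟨hle, h2⟩
        by_contra hcon
        exact h2 ⟨w, hwB, hw1, le_of_not_gt hcon⟩
      · -- B has no middle point ≤ x; then c is not a middle point and B = B0
        exfalso
        have hcrow : (c.1 = 0 ∧ 1 ≤ c.2 ∧ c.2 ≤ k) ∨ (c.1 = 1 ∧ 1 ≤ c.2 ∧ c.2 ≤ l)
            ∨ (c.1 = 2 ∧ 1 ≤ c.2 ∧ c.2 ≤ m) := by
          cases hB0 with
          | inl h => rcases hpsub B0 h hcB0 with h' | h' <;> tauto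
          | inr h => rcases hqsub B0 h hcB0 with h' | h' <;> tauto
        rcases hcrow with hc0 | hc1 | hc2
        · -- top row: B and B0 are both p-blocks containing c, hence equal
          have hBp : B ∈ p := by
            cases hB with
            | inl h => exact h
            | inr h =>
              rcases hqsub B h hcB with h' | h' <;> omega
          have hB0p : B0 ∈ p := by
            cases hB0 with
            | inl h => exact h
            | inr h =>
              rcases hqsub B0 h hcB0 with h' | h' <;> omega
          obtain ⟨D, -, hDuniq⟩ := hppart c (Or.inl hc0)
          have hBB0 : B = B0 :=
            (hDuniq B ⟨hBp, hcB⟩).trans (hDuniq B0 ⟨hB0p, hcB0⟩).symm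
          have hwlt := ih.2 B0 hB0 hbB0 w (hBB0 ▸ hwB) hw1
          exact hle ⟨w, hwB, hw1, le_of_lt hwlt⟩
        · -- middle row: c itself is a middle point of B with c.2 < x
          have hclt := ih.2 B0 hB0 hbB0 c hcB0 hc1.1
          exact hle ⟨c, hcB, hc1.1, le_of_lt hclt⟩
        · -- bottom row: B and B0 are both q-blocks containing c, hence equal
          have hBq : B ∈ q := by
            cases hB with
            | inl h =>
              rcases hpsub B h hcB with h' | h' <;> omega
            | inr h => exact h
          have hB0q : B0 ∈ q := by
            cases hB0 with
            | inl h =>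
              rcases hpsub B0 h hcB0 with h' | h' <;> omega
            | inr h => exact h
          obtain ⟨D, -, hDuniq⟩ := hqpart c (Or.inr hc2)
          have hBB0 : B = B0 :=
            (hDuniq B ⟨hBq, hcB⟩).trans (hDuniq B0 ⟨hB0q, hcB0⟩).symm
          have hwlt := ih.2 B0 hB0 hbB0 w (hBB0 ▸ hwB) hw1
          exact hle ⟨w, hwB, hw1, le_of_lt hwlt⟩
  -- conclude: z lies in some block, so z.2 < x, contradicting x ≤ z.2
  obtain ⟨-, hzP⟩ := key z hyz
  have hzchain : ChainRel p q a z := by rw [hCa] at hzC; exact hzC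
  obtain ⟨n, Bs, hmem, -, hv, -⟩ := hzchain
  have := hzP (Bs (Fin.last n)) (hmem _) hv z hv hz1
  omega


end Stmt10
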